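/- Let C be a category. The class S of eventually invertible morphisms in the category Cauch(ℕ, C) of Cauchy sequences in C admits a calculus of left fractions, i.e. S contains all identities and is closed under composition, every cospan X' ←σ− X → Y with σ ∈ S can be completed to a commutative square X → Y, X' → Y' with the morphism Y → Y' in S, and for any pair of parallel morphisms α, β : X → Y that are equalized by some σ : X' → X in S there exists τ : Y → Y' in S with τα = τβ. -/

import Mathlib

/-!
STATEMENT 0: For any category `C`, the class `S` of eventually invertible morphisms in
the category `Cauch(ℕ, C)` of Cauchy sequences in `C` admits a calculus of left fractions.
-/

open CategoryTheory CategoryTheory.Limits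

universe v u

namespace SeqCompletion

/-- A sequence `X : ℕ ⥤ C` is a Cauchy sequence if for every object `C'` of `C`
the maps `Hom(C', X i) → Hom(C', X j)` are bijective for all `j ≥ i ≥ n` for some `n`. -/
def IsCauchy {C : Type u} [Category.{v} C] (X : ℕ ⥤ C) : Prop :=
  ∀ C' : C, ∃ n : ℕ, ∀ (i j : ℕ), n ≤ i → ∀ (hij : i ≤ j),
    Function.Bijective (fun g : C' ⟶ X.obj i => g ≫ X.map (homOfLE hij))

variable (C : Type u) [Category.{v} C]

/-- The category `Cauch(ℕ, C)` of Cauchy sequences in `C`,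
a full subcategory of `Fun(ℕ, C)`. -/
abbrev CauchCat := ObjectProperty.FullSubcategory (fun X : ℕ ⥤ C => IsCauchy X)

/-- The class of eventually invertible morphisms between Cauchy sequences:
`φ : X ⟶ Y` such that for every `C'` the maps `Hom(C', X i) → Hom(C', Y i)` are
bijective for all sufficiently large `i`. -/
def evtInv : MorphismProperty (CauchCat C) := fun X _Y φ =>
  ∀ C' : C, ∃ n : ℕ, ∀ i : ℕ, n ≤ i →
    Function.Bijective (fun g : C' ⟶ X.obj.obj i =>
      g ≫ ((ObjectProperty.ι _).map φ).app i)

section Aux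

variable {D : Type u} [Category.{v} D]

/-- View a morphism of Cauchy sequences as a natural transformation. -/
abbrev toNat {X Y : CauchCat D} (φ : X ⟶ Y) : X.obj ⟶ Y.obj := φ.hom

lemma hom_ext' {X Y : CauchCat D} {f g : X ⟶ Y}
    (h : ∀ i, (toNat f).app i = (toNat g).app i) : f = g :=
  InducedCategory.Hom.ext (NatTrans.ext (funext h))

/-- Reindexing a Cauchy sequence along a monotone, inflationary map is Cauchy. -/
def reindexCauch (X : CauchCat D) (u : ℕ → ℕ) (hu : Monotone u) (hle : ∀ i, i ≤ u i) :
    CauchCat D :=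
  ⟨hu.functor ⋙ X.obj, fun C' => by
    obtain ⟨n, hn⟩ := X.property C'
    exact ⟨n, fun i j hi hij => hn (u i) (u j) (hi.trans (hle i)) (hu hij)⟩⟩

/-- The canonical morphism from a Cauchy sequence to its reindexing. -/
def canHom (X : CauchCat D) (u : ℕ → ℕ) (hu : Monotone u) (hle : ∀ i, i ≤ u i) :
    X ⟶ reindexCauch X u hu hle :=
  ObjectProperty.homMk
  { app := fun i => X.obj.map (homOfLE (hle i))
    naturality := fun i j f => by
      show X.obj.map f ≫ X.obj.map (homOfLE (hle j)) =
        X.obj.map (homOfLE (hle i)) ≫ X.obj.map (homOfLE (hu (leOfHom f)))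
      rw [← X.obj.map_comp, ← X.obj.map_comp]
      congr 1 }

lemma canHom_mem (X : CauchCat D) (u : ℕ → ℕ) (hu : Monotone u) (hle : ∀ i, i ≤ u i) :
    evtInv D (canHom X u hu hle) := fun C' => by
  obtain ⟨n, hn⟩ := X.property C'
  exact ⟨n, fun i hi => hn i (u i) hi (hle i)⟩

/-- Every eventually invertible morphism of Cauchy sequences admits a retraction
up to reindexing. -/
lemma exists_retraction {X Y : CauchCat D} (σ : X ⟶ Y) (hσ : evtInv D σ) :
    ∃ (u : ℕ → ℕ) (hu : Monotone u) (hle : ∀ i, i ≤ u i)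
      (η : Y.obj ⟶ hu.functor ⋙ X.obj),
      (∀ i, (toNat σ).app i ≫ η.app i = X.obj.map (homOfLE (hle i))) ∧
      (∀ i, η.app i ≫ (toNat σ).app (u i) = Y.obj.map (homOfLE (hle i))) := by
  classical
  have hσ' : ∀ C' : D, ∃ n : ℕ, ∀ i : ℕ, n ≤ i →
      Function.Bijective (fun g : C' ⟶ X.obj.obj i => g ≫ (toNat σ).app i) := hσ
  choose N hN using hσ'
  set v : ℕ → ℕ := fun i => max i (max (N (Y.obj.obj i)) (N (X.obj.obj i))) with hv
  set u : ℕ → ℕ := fun i => (Finset.range (i + 1)).sup v with hudef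
  have hu : Monotone u := fun i j hij =>
    Finset.sup_mono (Finset.range_subset_range.2 (by omega))
  have hvu : ∀ i j, i ≤ j → v i ≤ u j := fun i j hij =>
    Finset.le_sup (Finset.mem_range.2 (by omega))
  have hle : ∀ i, i ≤ u i := fun i => le_trans (le_max_left _ _) (hvu i i le_rfl)
  have hYu : ∀ i j, i ≤ j → N (Y.obj.obj i) ≤ u j := fun i j hij =>
    le_trans (le_trans (le_max_left _ _) (le_max_right _ _)) (hvu i j hij)
  have hXu : ∀ i, N (X.obj.obj i) ≤ u i := fun i =>
    le_trans (le_trans (le_max_right _ _) (le_max_right _ _)) (hvu i i le_rfl)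
  -- construct η componentwise
  have hsurj : ∀ i, ∃ g : Y.obj.obj i ⟶ X.obj.obj (u i),
      g ≫ (toNat σ).app (u i) = Y.obj.map (homOfLE (hle i)) := fun i =>
    (hN (Y.obj.obj i) (u i) (hYu i i le_rfl)).2 _
  choose η hη using hsurj
  have hnat : ∀ (i j : ℕ) (f : i ⟶ j),
      Y.obj.map f ≫ η j = η i ≫ X.obj.map (homOfLE (hu (leOfHom f))) := by
    intro i j f
    apply (hN (Y.obj.obj i) (u j) (hYu i j (leOfHom f))).1
    show (Y.obj.map f ≫ η j) ≫ (toNat σ).app (u j)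
        = (η i ≫ X.obj.map (homOfLE (hu (leOfHom f)))) ≫ (toNat σ).app (u j)
    rw [Category.assoc, hη j, Category.assoc, (toNat σ).naturality, ← Category.assoc,
      hη i, ← Y.obj.map_comp, ← Y.obj.map_comp]
    congr 1
  refine ⟨u, hu, hle, ⟨η, fun i j f => hnat i j f⟩, fun i => ?_, fun i => hη i⟩
  · apply (hN (X.obj.obj i) (u i) (hXu i)).1
    show ((toNat σ).app i ≫ η i) ≫ (toNat σ).app (u i)
        = X.obj.map (homOfLE (hle i)) ≫ (toNat σ).app (u i)
    rw [Category.assoc, hη i, ← (toNat σ).naturality]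

end Aux

/-- The eventually invertible morphisms in `Cauch(ℕ, C)` admit a calculus of left
fractions: they contain the identities and are stable under composition, every cospan
`X' ← X → Y` with the first leg eventually invertible can be completed to a commutative
square whose new leg is eventually invertible, and two parallel morphisms equalized by
an eventually invertible morphism are coequalized by one. -/
theorem eventuallyInvertible_hasLeftCalculusOfFractions :
    (evtInv C).HasLeftCalculusOfFractions := by
  have mult : (evtInv C).IsMultiplicative :=
    { id_mem := fun X C' => by
        refine ⟨0, fun i _ => ?_⟩
        have : (fun g : C' ⟶ X.obj.obj i =>
            g ≫ ((ObjectProperty.ι _).map (𝟙 X)).app i) = id := by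
          funext g; exact Category.comp_id g
        rw [this]; exact Function.bijective_id
      comp_mem := fun {X Y Z} f g hf hg C' => by
        obtain ⟨n₁, h₁⟩ := hf C'
        obtain ⟨n₂, h₂⟩ := hg C'
        refine ⟨max n₁ n₂, fun i hi => ?_⟩
        have : (fun gg : C' ⟶ X.obj.obj i =>
            gg ≫ ((ObjectProperty.ι _).map (f ≫ g)).app i)
            = (fun gg : C' ⟶ Y.obj.obj i =>
                gg ≫ ((ObjectProperty.ι _).map g).app i) ∘
              (fun gg : C' ⟶ X.obj.obj i =>
                gg ≫ ((ObjectProperty.ι _).map f).app i) := by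
          funext gg
          exact (Category.assoc gg ((toNat f).app i) ((toNat g).app i)).symm
        rw [this]
        exact (h₂ i (le_trans (le_max_right _ _) hi)).comp
          (h₁ i (le_trans (le_max_left _ _) hi)) }
  refine { toIsMultiplicative := mult, exists_leftFraction := ?_, ext := ?_ }
  · intro X Y φ
    obtain ⟨u, hu, hle, η, h1, h2⟩ := exists_retraction φ.s φ.hs
    refine ⟨⟨ObjectProperty.homMk (show X.obj ⟶ (reindexCauch Y u hu hle).obj from
        η ≫ Functor.whiskerLeft hu.functor (toNat φ.f)), canHom Y u hu hle,
        canHom_mem Y u hu hle⟩, ?_⟩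
    apply hom_ext'
    intro i
    show (toNat φ.f).app i ≫ Y.obj.map (homOfLE (hle i))
        = (toNat φ.s).app i ≫ η.app i ≫ (toNat φ.f).app (u i)
    refine Eq.trans ?_ (Category.assoc ((toNat φ.s).app i) _ _); rw [h1 i]
    exact ((toNat φ.f).naturality _).symm
  · intro X' X Y f₁ f₂ s hs heq
    obtain ⟨u, hu, hle, η, h1, h2⟩ := exists_retraction s hs
    refine ⟨reindexCauch Y u hu hle, canHom Y u hu hle, canHom_mem Y u hu hle, ?_⟩
    apply hom_ext'
    intro i
    have key : ∀ f : X ⟶ Y, (toNat f).app i ≫ Y.obj.map (homOfLE (hle i))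
        = η.app i ≫ (toNat (s ≫ f)).app (u i) := by
      intro f
      show (toNat f).app i ≫ Y.obj.map (homOfLE (hle i))
          = η.app i ≫ (toNat s).app (u i) ≫ (toNat f).app (u i)
      refine Eq.trans ?_ (Category.assoc (η.app i) _ _); rw [h2 i]
      exact ((toNat f).naturality _).symm
    show (toNat f₁).app i ≫ Y.obj.map (homOfLE (hle i))
        = (toNat f₂).app i ≫ Y.obj.map (homOfLE (hle i))
    rw [key f₁, key f₂, heq]

end SeqCompletion
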